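/- If A ∈ ℂ^{n×t} (n ≤ t) is such that the eigenvalues of A Aᵀ are nonzero and pairwise distinct, then A admits an algebraic SVD, i.e. A = U D Vᵀ for some U ∈ O_ℂ(n), V ∈ O_ℂ(t) and diagonal D ∈ ℂ^{n×t}. -/

import Mathlib

open Matrix Polynomial


lemma csqrt (z : ℂ) : ∃ w : ℂ, w ^ 2 = z := IsAlgClosed.exists_pow_nat_eq z two_pos

lemma eig {n : ℕ} (B : Matrix (Fin n) (Fin n) ℂ) {μ : ℂ} (h : μ ∈ B.charpoly.roots) :
    ∃ x : Fin n → ℂ, x ≠ 0 ∧ B *ᵥ x = μ • x := by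
  have hroot : B.charpoly.eval μ = 0 :=
    (Polynomial.mem_roots'.mp h).2
  have hdet : (Matrix.scalar (Fin n) μ - B).det = 0 := by
    have : B.charpoly.eval μ = (Matrix.scalar (Fin n) μ - B).det := by
      rw [Matrix.charpoly, eval_det, matPolyEquiv_charmatrix]
      simp
    rw [← this, hroot]
  obtain ⟨x, hx0, hx⟩ := Matrix.exists_mulVec_eq_zero_iff.mpr hdet
  refine ⟨x, hx0, ?_⟩
  have hs : Matrix.scalar (Fin n) μ *ᵥ x = μ • x := by
    ext i
    simp [Matrix.mulVec_diagonal]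
  rw [Matrix.sub_mulVec, hs, sub_eq_zero] at hx
  exact hx.symm




lemma extend_step {m t : ℕ} (hmt : m < t) (v : Fin m → Fin t → ℂ)
    (hv : ∀ i j, v i ⬝ᵥ v j = if i = j then 1 else 0) :
    ∃ w : Fin t → ℂ, w ⬝ᵥ w = 1 ∧ ∀ i, v i ⬝ᵥ w = 0 := by
  set N : Matrix (Fin m) (Fin t) ℂ := Matrix.of v with hN
  have hNNt : N * Nᵀ = 1 := by
    ext i j
    simpa [hN, Matrix.mul_apply, Matrix.one_apply, dotProduct] using hv i j
  -- kernel of N is nontrivial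
  have hker : ∃ x : Fin t → ℂ, x ≠ 0 ∧ N *ᵥ x = 0 := by
    have h1 := LinearMap.finrank_range_add_finrank_ker N.mulVecLin
    have h2 : Module.finrank ℂ (LinearMap.range N.mulVecLin) ≤ m := by
      simpa using (LinearMap.range N.mulVecLin).finrank_le
    have h3 : Module.finrank ℂ (Fin t → ℂ) = t := by simp
    have h4 : 0 < Module.finrank ℂ (LinearMap.ker N.mulVecLin) := by omega
    have h5 : LinearMap.ker N.mulVecLin ≠ ⊥ := by
      intro hbot
      rw [hbot] at h4
      simp at h4
    obtain ⟨x, hx1, hx2⟩ := Submodule.exists_mem_ne_zero_of_ne_bot h5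
    exact ⟨x, hx2, by simpa using hx1⟩
  obtain ⟨x, hx0, hxk⟩ := hker
  -- find element of kernel with nonzero self-dot-product
  obtain ⟨j, hj⟩ := Function.ne_iff.mp hx0
  have hj : x j ≠ 0 := by simpa using hj
  set y : Fin t → ℂ := Pi.single j 1 with hy
  set k : Fin t → ℂ := y - Nᵀ *ᵥ (N *ᵥ y) with hk
  have hkk : N *ᵥ k = 0 := by
    rw [hk, Matrix.mulVec_sub, Matrix.mulVec_mulVec, hNNt, Matrix.one_mulVec, sub_self]
  have hxk' : x ⬝ᵥ k = x j := by
    have h1 : x ⬝ᵥ (Nᵀ *ᵥ (N *ᵥ y)) = (N *ᵥ x) ⬝ᵥ (N *ᵥ y) := by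
      rw [Matrix.dotProduct_mulVec, Matrix.vecMul_transpose]
    rw [hk, dotProduct_sub, h1, hxk, zero_dotProduct, sub_zero, hy]
    simp [dotProduct_single]
  have : ∃ z : Fin t → ℂ, N *ᵥ z = 0 ∧ z ⬝ᵥ z ≠ 0 := by
    by_cases h1 : x ⬝ᵥ x ≠ 0
    · exact ⟨x, hxk, h1⟩
    by_cases h2 : k ⬝ᵥ k ≠ 0
    · exact ⟨k, hkk, h2⟩
    push_neg at h1 h2
    refine ⟨x + k, by rw [Matrix.mulVec_add, hxk, hkk, add_zero], ?_⟩
    have : (x + k) ⬝ᵥ (x + k) = 2 * (x ⬝ᵥ k) := by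
      rw [dotProduct_add, add_dotProduct, add_dotProduct, h1, h2,
        dotProduct_comm k x]
      ring
    rw [this]
    simp only [mul_ne_zero_iff, hxk']
    exact ⟨two_ne_zero, hj⟩
  obtain ⟨z, hz0, hzz⟩ := this
  obtain ⟨c, hc⟩ := csqrt (z ⬝ᵥ z)⁻¹
  refine ⟨c • z, ?_, fun i => ?_⟩
  · rw [smul_dotProduct, dotProduct_smul, smul_eq_mul, smul_eq_mul, ← mul_assoc, ← sq, hc,
      inv_mul_cancel₀ hzz]
  · have : v i ⬝ᵥ z = (N *ᵥ z) i := by simp [Matrix.mulVec, hN, dotProduct]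
    rw [dotProduct_smul, this, hz0]
    simp



lemma extend_all {t : ℕ} : ∀ d m, m + d = t → ∀ v : Fin m → Fin t → ℂ,
    (∀ i j, v i ⬝ᵥ v j = if i = j then 1 else 0) →
    ∃ v' : Fin t → Fin t → ℂ, (∀ i j, v' i ⬝ᵥ v' j = if i = j then 1 else 0) ∧
      ∀ (i : Fin m) (h : (i : ℕ) < t), v' ⟨i, h⟩ = v i := by
  intro d
  induction d with
  | zero =>
    intro m hm v hv
    subst hm
    exact ⟨v, hv, fun i h => by simp⟩
  | succ d ih =>
    intro m hm v hv
    have hmt : m < t := by omega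
    obtain ⟨w, hw1, hw2⟩ := extend_step hmt v hv
    set v₂ : Fin (m + 1) → Fin t → ℂ :=
      fun i => if h : (i : ℕ) < m then v ⟨i, h⟩ else w with hv₂
    have hv₂o : ∀ i j, v₂ i ⬝ᵥ v₂ j = if i = j then 1 else 0 := by
      intro i j
      by_cases hi : (i : ℕ) < m <;> by_cases hj : (j : ℕ) < m
      · rw [hv₂]
        simp only [dif_pos hi, dif_pos hj, hv]
        exact if_congr (by simp [Fin.ext_iff]) rfl rfl
      · rw [hv₂]
        simp only [dif_pos hi, dif_neg hj]
        rw [hw2 ⟨i, hi⟩, if_neg (by rintro rfl; exact hj hi)]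
      · rw [hv₂]
        simp only [dif_neg hi, dif_pos hj]
        rw [dotProduct_comm, hw2 ⟨j, hj⟩, if_neg (by rintro rfl; exact hi hj)]
      · rw [hv₂]
        simp only [dif_neg hi, dif_neg hj, hw1]
        rw [if_pos (Fin.ext (by omega))]
    obtain ⟨v', hv'o, hv'e⟩ := ih (m + 1) (by omega) v₂ hv₂o
    refine ⟨v', hv'o, fun i h => ?_⟩
    have := hv'e ⟨i, by omega⟩ h
    rw [this, hv₂]
    simp




/-- If the eigenvalues of `A Aᵀ` (the roots of its characteristic polynomial) are nonzero and
pairwise distinct, then `A ∈ ℂ^{n×t}` (`n ≤ t`) admits an algebraic SVD `A = U D Vᵀ` with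
`U ∈ O_ℂ(n)`, `V ∈ O_ℂ(t)` and `D` diagonal. -/
theorem stmt6 {n t : ℕ} (hnt : n ≤ t) (A : Matrix (Fin n) (Fin t) ℂ)
    (hnz : ∀ μ ∈ (A * Aᵀ).charpoly.roots, μ ≠ 0)
    (hdis : (A * Aᵀ).charpoly.roots.Nodup) :
    ∃ (U : Matrix (Fin n) (Fin n) ℂ) (V : Matrix (Fin t) (Fin t) ℂ)
      (D : Matrix (Fin n) (Fin t) ℂ), U * Uᵀ = 1 ∧ V * Vᵀ = 1 ∧
      (∀ (i : Fin n) (j : Fin t), (i : ℕ) ≠ (j : ℕ) → D i j = 0) ∧ A = U * D * Vᵀ := by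
  classical
  set B := A * Aᵀ with hB
  have hBsym : Bᵀ = B := by rw [hB, transpose_mul, transpose_transpose]
  -- enumerate the n distinct roots
  have hsplits : B.charpoly.Splits := IsAlgClosed.splits B.charpoly
  have hcard : Multiset.card B.charpoly.roots = n := by
    rw [(Polynomial.splits_iff_card_roots).mp hsplits, Matrix.charpoly_natDegree_eq_dim,
      Fintype.card_fin]
  set l := B.charpoly.roots.toList with hl
  have hlen : l.length = n := by rw [hl, Multiset.length_toList, hcard]
  have hlnd : l.Nodup := by
    rw [← Multiset.coe_nodup, hl, Multiset.coe_toList]; exact hdis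
  set μ : Fin n → ℂ := fun i => l.get ⟨i.1, by rw [hlen]; exact i.2⟩ with hμ
  have hμinj : Function.Injective μ := by
    intro i j hij
    have h2 := List.nodup_iff_injective_get.mp hlnd hij
    have h3 : (i : ℕ) = (j : ℕ) := by simpa using h2
    exact Fin.ext h3
  have hμroot : ∀ i, μ i ∈ B.charpoly.roots := by
    intro i
    rw [← Multiset.coe_toList B.charpoly.roots, ← hl, Multiset.mem_coe]
    exact List.get_mem l ⟨i.1, _⟩
  have hμne : ∀ i, μ i ≠ 0 := fun i => hnz _ (hμroot i)
  -- eigenvectors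
  choose u hu0 hu using fun i => eig B (hμroot i)
  -- bilinear orthogonality of eigenvectors
  have hswap : ∀ x y, (B *ᵥ x) ⬝ᵥ y = (B *ᵥ y) ⬝ᵥ x := by
    intro x y
    rw [dotProduct_comm, Matrix.dotProduct_mulVec, ← Matrix.mulVec_transpose, hBsym]
  have horth : ∀ i j, i ≠ j → u i ⬝ᵥ u j = 0 := by
    intro i j hij
    have key : μ i * (u i ⬝ᵥ u j) = μ j * (u i ⬝ᵥ u j) := by
      calc μ i * (u i ⬝ᵥ u j) = (μ i • u i) ⬝ᵥ u j := by rw [smul_dotProduct]; rfl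
        _ = (B *ᵥ u i) ⬝ᵥ u j := by rw [hu i]
        _ = (B *ᵥ u j) ⬝ᵥ u i := hswap _ _
        _ = (μ j • u j) ⬝ᵥ u i := by rw [hu j]
        _ = μ j * (u j ⬝ᵥ u i) := by rw [smul_dotProduct]; rfl
        _ = μ j * (u i ⬝ᵥ u j) := by rw [dotProduct_comm]
    have hne : μ i ≠ μ j := fun h => hij (hμinj h)
    have : (μ i - μ j) * (u i ⬝ᵥ u j) = 0 := by linear_combination key
    rcases mul_eq_zero.mp this with h | h
    · exact absurd (sub_eq_zero.mp h) hne
    · exact h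
  -- nonzero self-pairing
  have hself : ∀ i, u i ⬝ᵥ u i ≠ 0 := by
    intro i hcontra
    haveI : Nonempty (Fin n) := ⟨i⟩
    have hev : ∀ j, Module.End.HasEigenvector B.mulVecLin (μ j) (u j) := by
      intro j
      refine ⟨Module.End.mem_eigenspace_iff.mpr ?_, hu0 j⟩
      simpa [Matrix.mulVecLin_apply] using hu j
    have hli : LinearIndependent ℂ u :=
      Module.End.eigenvectors_linearIndependent' B.mulVecLin μ hμinj u hev
    have hcardeq : Fintype.card (Fin n) = Module.finrank ℂ (Fin n → ℂ) := by simp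
    set bu := basisOfLinearIndependentOfCardEqFinrank hli hcardeq with hbu
    have hbucoe : ⇑bu = u := coe_basisOfLinearIndependentOfCardEqFinrank hli hcardeq
    set φ : (Fin n → ℂ) →ₗ[ℂ] ℂ :=
      { toFun := fun x => u i ⬝ᵥ x
        map_add' := fun x y => dotProduct_add _ _ _
        map_smul' := fun c x => by simp } with hφ
    have hφ0 : φ = 0 := by
      apply bu.ext
      intro j
      rw [hbucoe]
      by_cases hji : j = i
      · subst hji; simpa [hφ] using hcontra
      · simpa [hφ] using horth i j (Ne.symm hji)
    have : ∀ k, u i k = 0 := by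
      intro k
      have := congrFun (congrArg (fun f => f.toFun) hφ0) (Pi.single k 1)
      simpa [hφ, dotProduct_single] using this
    exact hu0 i (funext this)
  -- normalize eigenvectors
  choose c hc using fun i => csqrt ((u i ⬝ᵥ u i)⁻¹)
  set w : Fin n → Fin n → ℂ := fun i => c i • u i with hw
  have hworth : ∀ i j, w i ⬝ᵥ w j = if i = j then c i * c j * (u i ⬝ᵥ u j) else 0 := by
    intro i j
    rw [hw]
    simp only [smul_dotProduct, dotProduct_smul, smul_eq_mul]
    by_cases hij : i = j
    · rw [if_pos hij]; ring
    · rw [if_neg hij, horth i j hij]; ring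
  have hwon : ∀ i j, w i ⬝ᵥ w j = if i = j then 1 else 0 := by
    intro i j
    rw [hworth]
    by_cases hij : i = j
    · subst hij
      rw [if_pos rfl, if_pos rfl, ← sq, hc, inv_mul_cancel₀ (hself i)]
    · rw [if_neg hij, if_neg hij]
  have hwB : ∀ i, B *ᵥ w i = μ i • w i := by
    intro i
    rw [hw]
    simp only [Matrix.mulVec_smul, hu]
    rw [smul_comm]
  -- build U
  set U : Matrix (Fin n) (Fin n) ℂ := (Matrix.of w)ᵀ with hU
  have hUtU : Uᵀ * U = 1 := by
    rw [hU, transpose_transpose]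
    ext i j
    simpa [Matrix.mul_apply, dotProduct, Matrix.one_apply] using hwon i j
  have hUUt : U * Uᵀ = 1 := mul_eq_one_comm.mp hUtU
  -- singular values
  choose σ hσ using fun i => csqrt (μ i)
  have hσne : ∀ i, σ i ≠ 0 := by
    intro i h
    apply hμne i
    rw [← hσ i, h]; ring
  -- the first n rows of Vᵀ
  set v : Fin n → Fin t → ℂ := fun i => (σ i)⁻¹ • (Aᵀ *ᵥ w i) with hv
  have hkey : ∀ i j, (Aᵀ *ᵥ w i) ⬝ᵥ (Aᵀ *ᵥ w j) = μ i * (w i ⬝ᵥ w j) := by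
    intro i j
    rw [Matrix.dotProduct_mulVec, Matrix.vecMul_transpose, Matrix.mulVec_mulVec, ← hB,
      hwB i, smul_dotProduct]
    rfl
  have hvon : ∀ i j, v i ⬝ᵥ v j = if i = j then 1 else 0 := by
    intro i j
    rw [hv]
    simp only [smul_dotProduct, dotProduct_smul, smul_eq_mul, hkey i j, hwon i j]
    by_cases hij : i = j
    · subst hij
      simp only [if_pos rfl]
      rw [← hσ i]
      field_simp
      rw [div_self (hσne i)]
    · simp only [if_neg hij]
      ring
  -- extend to a full orthonormal family
  obtain ⟨v', hv'on, hv'e⟩ := extend_all (t - n) n (by omega) v hvon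
  set V : Matrix (Fin t) (Fin t) ℂ := (Matrix.of v')ᵀ with hV
  have hM : Matrix.of v' * (Matrix.of v')ᵀ = 1 := by
    ext i j
    simpa [Matrix.mul_apply, dotProduct, Matrix.one_apply] using hv'on i j
  have hVVt : V * Vᵀ = 1 := by
    rw [hV, transpose_transpose]
    exact mul_eq_one_comm.mp hM
  -- the diagonal matrix
  set D : Matrix (Fin n) (Fin t) ℂ :=
    Matrix.of (fun i j => if (i : ℕ) = (j : ℕ) then σ i else 0) with hD
  refine ⟨U, V, D, hUUt, hVVt, fun i j hij => by simp [hD, if_neg hij], ?_⟩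
  -- main identity
  have hUA : Uᵀ * A = D * (Matrix.of v') := by
    ext i j
    have hi : (i : ℕ) < t := lt_of_lt_of_le i.2 hnt
    have hrhs : (D * Matrix.of v') i j = σ i * v' ⟨i.1, hi⟩ j := by
      rw [Matrix.mul_apply]
      rw [Finset.sum_eq_single (⟨i.1, hi⟩ : Fin t)]
      · simp [hD]
      · intro k _ hk
        have : (i : ℕ) ≠ (k : ℕ) := by
          intro h
          exact hk (Fin.ext h.symm)
        simp [hD, if_neg this]
      · intro h
        exact absurd (Finset.mem_univ _) h
    rw [hrhs, hv'e i hi, hv]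
    simp only [Pi.smul_apply, smul_eq_mul]
    rw [← mul_assoc, mul_inv_cancel₀ (hσne i), one_mul]
    rw [hU, transpose_transpose, Matrix.mul_apply]
    simp [Matrix.mulVec, dotProduct, Matrix.of_apply, mul_comm]
  calc A = (U * Uᵀ) * A := by rw [hUUt, Matrix.one_mul]
    _ = U * (Uᵀ * A) := by rw [Matrix.mul_assoc]
    _ = U * (D * Matrix.of v') := by rw [hUA]
    _ = U * D * Vᵀ := by rw [hV, transpose_transpose, Matrix.mul_assoc]
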